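/- Let Π be the cyclic shift on (ℂ^d)^{⊗2t} and R the reflection (R sends |j₁⟩⊗…⊗|j_{2t}⟩ to |j_{2t}⟩⊗…⊗|j₁⟩), with d ≥ 2 and t ≥ 1. Then the 2t operators {R^n Π^{2τ} : n ∈ {0,1}, τ ∈ {0,…,t−1}} are linearly independent in End((ℂ^d)^{⊗2t}). -/

import Mathlib

/-- The cyclic shift operator `Π` on `(ℂ^d)^{⊗n}`. -/
def cyclicShift (d n : ℕ) : Matrix (Fin n → Fin d) (Fin n → Fin d) ℂ :=
  Matrix.of fun r c => if r = c ∘ finRotate n then 1 else 0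

/-- The reflectionOp operator `R` on `(ℂ^d)^{⊗n}`, reversing the order of the tensor factors:
`R |j₁⟩⊗…⊗|j_n⟩ = |j_n⟩⊗…⊗|j₁⟩`. -/
def reflectionOp (d n : ℕ) : Matrix (Fin n → Fin d) (Fin n → Fin d) ℂ :=
  Matrix.of fun r c => if r = c ∘ Fin.rev then 1 else 0

open Fin.NatCast

/-- The permutation-type matrix for an arbitrary map `σ`. -/
def pmat (d n : ℕ) (σ : Fin n → Fin n) : Matrix (Fin n → Fin d) (Fin n → Fin d) ℂ :=
  Matrix.of fun r c => if r = c ∘ σ then 1 else 0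

lemma pmat_mul (d n : ℕ) (σ τ : Fin n → Fin n) :
    pmat d n σ * pmat d n τ = pmat d n (τ ∘ σ) := by
  ext r c
  simp only [pmat, Matrix.mul_apply, Matrix.of_apply, mul_ite, mul_one, mul_zero]
  rw [Finset.sum_ite_eq' Finset.univ (c ∘ τ) (fun b => if r = b ∘ σ then (1:ℂ) else 0)]
  simp [Function.comp_assoc]

lemma pmat_one (d n : ℕ) : pmat d n id = 1 := by
  ext r c
  simp [pmat, Matrix.one_apply]

lemma pmat_pow (d n : ℕ) (σ : Fin n → Fin n) (k : ℕ) :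
    (pmat d n σ) ^ k = pmat d n (σ^[k]) := by
  induction k with
  | zero => simpa using (pmat_one d n).symm
  | succ k ih =>
    rw [pow_succ, ih, pmat_mul, Function.iterate_succ']

lemma rot_iter (N : ℕ) [NeZero N] (k : ℕ) (j : Fin N) :
    (⇑(finRotate N))^[k] j = j + (k : Fin N) := by
  obtain ⟨m, rfl⟩ := Nat.exists_eq_succ_of_ne_zero (NeZero.ne N)
  induction k with
  | zero => simp
  | succ k ih =>
    rw [Function.iterate_succ_apply', ih, finRotate_succ_apply, Nat.cast_add, Nat.cast_one,
      add_assoc]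

/-- For `d ≥ 2`, `t ≥ 1`, the `2t` operators `R^n Π^{2τ}`
(`n ∈ {0,1}`, `τ ∈ {0,…,t−1}`) on `(ℂ^d)^{⊗2t}` are linearly independent. -/
theorem stmt10 (d t : ℕ) (hd : 2 ≤ d) (ht : 1 ≤ t) :
    LinearIndependent ℂ (fun p : Fin 2 × Fin t =>
      (reflectionOp d (2 * t)) ^ (p.1 : ℕ) * (cyclicShift d (2 * t)) ^ (2 * (p.2 : ℕ))) := by
  have hN : (2 * t) ≠ 0 := by omega
  haveI : NeZero (2 * t) := ⟨hN⟩
  haveI : NeZero d := ⟨by omega⟩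
  -- the permutations
  set σ : Fin 2 × Fin t → (Fin (2 * t) → Fin (2 * t)) :=
    fun p => (⇑(finRotate (2 * t)))^[2 * (p.2 : ℕ)] ∘ (Fin.rev)^[(p.1 : ℕ)] with hσ
  have hfam : (fun p : Fin 2 × Fin t =>
      (reflectionOp d (2 * t)) ^ (p.1 : ℕ) * (cyclicShift d (2 * t)) ^ (2 * (p.2 : ℕ)))
      = fun p => pmat d (2 * t) (σ p) := by
    funext p
    show pmat d (2 * t) Fin.rev ^ _ * pmat d (2 * t) (⇑(finRotate (2 * t))) ^ _ = _
    rw [pmat_pow, pmat_pow, pmat_mul]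
  rw [hfam]
  -- the distinguished preimages of 0
  set jv : Fin 2 × Fin t → Fin (2 * t) :=
    fun p => (Fin.rev)^[(p.1 : ℕ)] (-(((2 * (p.2 : ℕ) : ℕ)) : Fin (2 * t))) with hjv
  have hc_val : ∀ τ : Fin t, ((-(((2 * (τ : ℕ) : ℕ)) : Fin (2 * t))) : Fin (2 * t)).val
      = (2 * t - 2 * (τ : ℕ)) % (2 * t) := by
    intro τ
    rw [Fin.coe_neg, Fin.val_natCast, Nat.mod_eq_of_lt (by omega : 2 * (τ : ℕ) < 2 * t)]
  -- σ p sends jv p to 0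
  have ha : ∀ p, σ p (jv p) = 0 := by
    intro p
    have hrev : (Fin.rev)^[(p.1 : ℕ)] ((Fin.rev)^[(p.1 : ℕ)]
        (-(((2 * (p.2 : ℕ) : ℕ)) : Fin (2 * t)))) = -(((2 * (p.2 : ℕ) : ℕ)) : Fin (2 * t)) := by
      have h2 : (p.1 : ℕ) = 0 ∨ (p.1 : ℕ) = 1 := by omega
      rcases h2 with h | h <;> simp [h, Fin.rev_rev]
    show (⇑(finRotate (2 * t)))^[2 * (p.2 : ℕ)] ((Fin.rev)^[(p.1 : ℕ)] (jv p)) = 0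
    rw [hjv]
    simp only []
    rw [hrev, rot_iter (2 * t), neg_add_cancel]
  -- σ p is injective
  have hinj : ∀ p, Function.Injective (σ p) := by
    intro p
    exact ((finRotate (2 * t)).injective.iterate _).comp (Fin.rev_injective.iterate _)
  -- mod facts usable by omega
  have hmod : ∀ τ : Fin t,
      (0 < (τ : ℕ) ∧ (2 * t - 2 * (τ : ℕ)) % (2 * t) = 2 * t - 2 * (τ : ℕ))
      ∨ ((τ : ℕ) = 0 ∧ (2 * t - 2 * (τ : ℕ)) % (2 * t) = 0) := by
    intro τ
    rcases Nat.eq_zero_or_pos (τ : ℕ) with h | h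
    · right
      refine ⟨h, ?_⟩
      simp [h]
    · left
      exact ⟨h, Nat.mod_eq_of_lt (by omega)⟩
  -- values of jv
  have hjval : ∀ p : Fin 2 × Fin t,
      ((p.1 : ℕ) = 0 ∧ (jv p).val = (2 * t - 2 * (p.2 : ℕ)) % (2 * t)) ∨
      ((p.1 : ℕ) = 1 ∧ (jv p).val = 2 * t - ((2 * t - 2 * (p.2 : ℕ)) % (2 * t) + 1)) := by
    intro p
    have h2 : (p.1 : ℕ) = 0 ∨ (p.1 : ℕ) = 1 := by omega
    rcases h2 with h | h
    · left
      refine ⟨h, ?_⟩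
      rw [hjv]
      simp only [h, Function.iterate_zero, id_eq]
      exact hc_val p.2
    · right
      refine ⟨h, ?_⟩
      rw [hjv]
      simp only [h, Function.iterate_one]
      rw [Fin.val_rev, hc_val p.2]
  -- jv is injective
  have hjinj : Function.Injective jv := by
    intro p q h
    have hv := congrArg Fin.val h
    have hb1 : (p.2 : ℕ) < t := p.2.isLt
    have hb2 : (q.2 : ℕ) < t := q.2.isLt
    have m1 := hmod p.2
    have m2 := hmod q.2
    rcases hjval p with ⟨h1, e1⟩ | ⟨h1, e1⟩ <;> rcases hjval q with ⟨h2, e2⟩ | ⟨h2, e2⟩ <;>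
      rw [e1, e2] at hv <;>
      rcases m1 with ⟨hz1, m1⟩ | ⟨hz1, m1⟩ <;> rcases m2 with ⟨hz2, m2⟩ | ⟨hz2, m2⟩ <;>
      simp only [m1, m2] at hv <;>
      exact Prod.ext (Fin.ext (by omega)) (Fin.ext (by omega))
  -- the test vector
  set e : Fin (2 * t) → Fin d := fun k => if k = 0 then 1 else 0 with he
  have he0 : e 0 = 1 := by simp [he]
  have hene : ∀ k : Fin (2 * t), k ≠ 0 → e k = 0 := fun k hk => by simp [he, hk]
  have h10 : (1 : Fin d) ≠ 0 := by
    intro hc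
    have := congrArg Fin.val hc
    rw [Fin.val_one'] at this
    simp at this
    omega
  -- key: e ∘ σ p determines p
  have key : ∀ p q : Fin 2 × Fin t, e ∘ σ p = e ∘ σ q → p = q := by
    intro p q h
    have h1 : e (σ p (jv p)) = e (σ q (jv p)) := congrFun h (jv p)
    rw [ha p, he0] at h1
    have hq0 : σ q (jv p) = 0 := by
      by_contra hne
      rw [hene _ hne] at h1
      exact h10 h1
    have : jv p = jv q := hinj q (by rw [hq0, ha q])
    exact hjinj this
  rw [Fintype.linearIndependent_iff]
  intro g hg p
  have h0 : (∑ q, g q • pmat d (2 * t) (σ q)) (e ∘ σ p) e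
      = (0 : Matrix (Fin (2 * t) → Fin d) (Fin (2 * t) → Fin d) ℂ) (e ∘ σ p) e := by
    rw [hg]
  rw [Matrix.sum_apply] at h0
  simp only [Matrix.smul_apply, pmat, Matrix.of_apply, Matrix.zero_apply, smul_eq_mul,
    mul_ite, mul_one, mul_zero] at h0
  have hterm : ∀ q : Fin 2 × Fin t,
      (if e ∘ σ p = e ∘ σ q then g q else 0) = if q = p then g q else 0 := by
    intro q
    by_cases hq : q = p
    · subst hq; simp
    · rw [if_neg (fun hc => hq (key q p (hc.symm))), if_neg hq]
  rw [Finset.sum_congr rfl (fun q _ => hterm q), Finset.sum_ite_eq' Finset.univ p g] at h0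
  simpa using h0
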